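/- For every subset S ⊂ {1,…,d} and every finite positive vector y_{S^c} = (y_j)_{j∈S^c}, there exists a unique u_S(y_{S^c}) ∈ V_S solving the stiff limit problem Σ_{j∈S^c} y_j ∫_{Ω_j} ∇u_S(y_{S^c})·∇v dx = ⟨f,v⟩ for all v ∈ V_S. Moreover, for any sequence of parameter vectors y^n ∈ (0,∞)^d with (y^n)_{S^c} = y_{S^c} fixed and y^n_j → ∞ for every j ∈ S, the solutions u(y^n) converge strongly in H^1_0(Ω) to u_S(y_{S^c}). -/

import Mathlib

open scoped BigOperators ENNReal InnerProductSpace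
open Filter

noncomputable section

variable {V : Type*} [NormedAddCommGroup V] [InnerProductSpace ℝ V] [CompleteSpace V]

/-- The closed subspace `V_S` of functions whose gradient vanishes on `Ω_j` for all `j ∈ S`,
encoded through the local Dirichlet forms `B j v w = ∫_{Ω_j} ∇v·∇w`. -/
def VS {d : ℕ} (B : Fin d → V →L[ℝ] V →L[ℝ] ℝ) (S : Set (Fin d)) : Submodule ℝ V where
  carrier := {v | ∀ j ∈ S, B j v = 0}
  add_mem' := by
    intro a b ha hb j hj
    simp only [Set.mem_setOf_eq] at *
    simp [map_add, ha j hj, hb j hj]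
  zero_mem' := by intro j hj; simp
  smul_mem' := by
    intro c a ha j hj
    simp only [Set.mem_setOf_eq] at *
    simp [map_smul, ha j hj]

/-- The parametric energy bilinear form `a_y(v,w) = Σ_j y_j ∫_{Ω_j} ∇v·∇w`. -/
def aForm {d : ℕ} (B : Fin d → V →L[ℝ] V →L[ℝ] ℝ) (y : Fin d → ℝ) (v w : V) : ℝ :=
  ∑ j, y j * B j v w

/-- The parametric energy norm `‖v‖_y`. -/
def eNorm {d : ℕ} (B : Fin d → V →L[ℝ] V →L[ℝ] ℝ) (y : Fin d → ℝ) (v : V) : ℝ :=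
  Real.sqrt (aForm B y v v)

/-- `u` is the weak solution of the diffusion problem with (finite) parameter `y`. -/
def IsWeakSol {d : ℕ} (B : Fin d → V →L[ℝ] V →L[ℝ] ℝ) (f : V →L[ℝ] ℝ)
    (y : Fin d → ℝ) (u : V) : Prop :=
  ∀ v : V, aForm B y u v = f v

/-- `u` is the (possibly stiff-limit) solution for an extended parameter `y ∈ (0,∞]^d`:
on the set `S = {j | y j = ∞}` of infinite entries, `u ∈ V_S` and `u` solves the
limit variational problem over `V_S`. -/
def IsSolE {d : ℕ} (B : Fin d → V →L[ℝ] V →L[ℝ] ℝ) (f : V →L[ℝ] ℝ)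
    (y : Fin d → ℝ≥0∞) (u : V) : Prop :=
  u ∈ VS B {j | y j = ∞} ∧
  ∀ v ∈ VS B {j | y j = ∞}, ∑ j, (y j).toReal * B j u v = f v

/-- `p` is the `H^1_0`-orthogonal projection of `u` onto `K`. -/
def IsOrthProj (K : Submodule ℝ V) (u p : V) : Prop :=
  p ∈ K ∧ ∀ w ∈ K, ⟪u - p, w⟫_ℝ = 0

/-- `p` is the Galerkin projection of `u` onto `K` for the energy inner product `⟨·,·⟩_y`. -/
def IsGalProj {d : ℕ} (B : Fin d → V →L[ℝ] V →L[ℝ] ℝ) (y : Fin d → ℝ)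
    (K : Submodule ℝ V) (u p : V) : Prop :=
  p ∈ K ∧ ∀ w ∈ K, aForm B y (u - p) w = 0

/-- Galerkin projection for an extended parameter `y ∈ (0,∞]^d` (the energy inner
product being restricted to the finite components of `y`). -/
def IsGalProjE {d : ℕ} (B : Fin d → V →L[ℝ] V →L[ℝ] ℝ) (y : Fin d → ℝ≥0∞)
    (K : Submodule ℝ V) (u p : V) : Prop :=
  p ∈ K ∧ ∀ w ∈ K, ∑ j, (y j).toReal * B j (u - p) w = 0

/-- The finite set of multi-indices `ν ∈ ℕ^d` of total degree `|ν| ≤ k`. -/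
def mIdx (d k : ℕ) : Finset (Fin d → ℕ) :=
  (Fintype.piFinset fun _ : Fin d => Finset.range (k+1)).filter fun ν => ∑ j, ν j ≤ k

/-- The monomial `y^ν`. -/
def mono {d : ℕ} (y : Fin d → ℝ) (ν : Fin d → ℕ) : ℝ := ∏ j, y j ^ ν j


section AuxLemmas

variable {V : Type*} [NormedAddCommGroup V] [InnerProductSpace ℝ V]

lemma bil_zero_of_self (b : V →L[ℝ] V →L[ℝ] ℝ) (hs : ∀ v w : V, b v w = b w v)
    (hn : ∀ v : V, 0 ≤ b v v) {v : V} (hv : b v v = 0) (w : V) : b v w = 0 := by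
  have h := hn ((b w w + 1) • v - b v w • w)
  have hw := hn w
  simp only [map_sub, map_smul, ContinuousLinearMap.sub_apply, ContinuousLinearMap.smul_apply,
    smul_eq_mul] at h
  rw [hs w v, hv] at h
  have h2 : (b v w)^2 * (b w w + 2) ≤ 0 := by nlinarith
  have h3 : (b v w)^2 = 0 := by nlinarith [sq_nonneg (b v w)]
  exact pow_eq_zero_iff (two_ne_zero) |>.mp h3

lemma bil_cs (b : V →L[ℝ] V →L[ℝ] ℝ) (hs : ∀ v w : V, b v w = b w v)
    (hn : ∀ v : V, 0 ≤ b v v) (v w : V) : (b v w)^2 ≤ b v v * b w w := by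
  rcases (hn w).eq_or_lt with h0 | hpos
  · have := bil_zero_of_self b hs hn h0.symm v
    rw [hs v w, this]
    simp
    exact mul_nonneg (hn v) (hn w)
  · have h := hn (b v w • w - b w w • v)
    simp only [map_sub, map_smul, ContinuousLinearMap.sub_apply, ContinuousLinearMap.smul_apply,
      smul_eq_mul] at h
    rw [hs w v] at h
    nlinarith

lemma sum_bil_le {d : ℕ} (B : Fin d → V →L[ℝ] V →L[ℝ] ℝ)
    (hs : ∀ j (v w : V), B j v w = B j w v) (hn : ∀ j (v : V), 0 ≤ B j v v)
    (s : Finset (Fin d)) (v w : V) :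
    ∑ j ∈ s, B j v w ≤
      Real.sqrt (∑ j ∈ s, B j v v) * Real.sqrt (∑ j ∈ s, B j w w) := by
  have h1 : ∑ j ∈ s, B j v w ≤ ∑ j ∈ s, Real.sqrt (B j v v) * Real.sqrt (B j w w) := by
    refine Finset.sum_le_sum fun j _ => ?_
    calc B j v w ≤ |B j v w| := le_abs_self _
      _ = Real.sqrt ((B j v w)^2) := (Real.sqrt_sq_eq_abs _).symm
      _ ≤ Real.sqrt (B j v v * B j w w) := Real.sqrt_le_sqrt (bil_cs (B j) (hs j) (hn j) v w)
      _ = _ := Real.sqrt_mul (hn j v) _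
  refine h1.trans ?_
  have h2 := Finset.sum_sq_le_sum_mul_sum_of_sq_eq_mul s
    (r := fun j => Real.sqrt (B j v v) * Real.sqrt (B j w w))
    (f := fun j => B j v v) (g := fun j => B j w w)
    (fun j _ => hn j v) (fun j _ => hn j w)
    (fun j _ => by rw [mul_pow, Real.sq_sqrt (hn j v), Real.sq_sqrt (hn j w)])
  calc ∑ j ∈ s, Real.sqrt (B j v v) * Real.sqrt (B j w w)
      = Real.sqrt ((∑ j ∈ s, Real.sqrt (B j v v) * Real.sqrt (B j w w))^2) :=
        (Real.sqrt_sq (Finset.sum_nonneg fun j _ =>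
          mul_nonneg (Real.sqrt_nonneg _) (Real.sqrt_nonneg _))).symm
    _ ≤ Real.sqrt ((∑ j ∈ s, B j v v) * ∑ j ∈ s, B j w w) := Real.sqrt_le_sqrt h2
    _ = _ := Real.sqrt_mul (Finset.sum_nonneg fun j _ => hn j v) _

lemma exists_pos_forall_le {d : ℕ} (S : Set (Fin d)) (y : Fin d → ℝ)
    (hy : ∀ j ∉ S, 0 < y j) : ∃ c : ℝ, 0 < c ∧ ∀ j ∉ S, c ≤ y j := by
  classical
  set F := Finset.univ.filter (fun j : Fin d => j ∉ S) with hF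
  by_cases hne : F.Nonempty
  · refine ⟨F.inf' hne y, ?_, ?_⟩
    · rw [Finset.lt_inf'_iff]
      intro j hj
      exact hy j (by simpa [hF] using hj)
    · intro j hj
      exact Finset.inf'_le _ (by simp [hF, hj])
  · exact ⟨1, one_pos, fun j hj => absurd ⟨j, by simp [hF, hj]⟩ hne⟩

end AuxLemmas

set_option maxHeartbeats 1600000 in
/-- Lemma 2.1: existence and uniqueness of the stiff limit solution
`u_S(y_{S^c})`, and strong convergence of `u(y)` to it as `y_j → ∞` for `j ∈ S`. -/
theorem statement0
    {V : Type*} [NormedAddCommGroup V] [InnerProductSpace ℝ V] [CompleteSpace V]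
    {d : ℕ}
    (B : Fin d → V →L[ℝ] V →L[ℝ] ℝ)
    (hsymm : ∀ (j : Fin d) (v w : V), B j v w = B j w v)
    (hnonneg : ∀ (j : Fin d) (v : V), 0 ≤ B j v v)
    (hsum : ∀ v w : V, ∑ j, B j v w = ⟪v, w⟫_ℝ)
    (f : V →L[ℝ] ℝ)
    (S : Set (Fin d)) (y : Fin d → ℝ) (hy : ∀ j ∉ S, 0 < y j) :
    (∃! uS : V, uS ∈ VS B S ∧ ∀ v ∈ VS B S, aForm B y uS v = f v) ∧
    (∀ uS : V, (uS ∈ VS B S ∧ ∀ v ∈ VS B S, aForm B y uS v = f v) →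
      ∀ (yseq : ℕ → Fin d → ℝ) (useq : ℕ → V),
        (∀ n j, 0 < yseq n j) →
        (∀ n, ∀ j ∉ S, yseq n j = y j) →
        (∀ j ∈ S, Tendsto (fun n => yseq n j) atTop atTop) →
        (∀ n, IsWeakSol B f (yseq n) (useq n)) →
        Tendsto useq atTop (nhds uS)) := by
  classical
  set K : Submodule ℝ V := VS B S with hKdef
  have memK : ∀ v : V, v ∈ K ↔ ∀ j ∈ S, B j v = 0 := fun v => Iff.rfl
  have hBK : ∀ v ∈ K, ∀ j ∈ S, ∀ w : V, B j v w = 0 := by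
    intro v hv j hj w
    rw [(memK v).1 hv j hj]
    rfl
  have hnormsq : ∀ v : V, ∑ j, B j v v = ‖v‖^2 := fun v => by
    rw [hsum v v, real_inner_self_eq_norm_sq]
  obtain ⟨c0, hc0, hc0le⟩ := exists_pos_forall_le S y hy
  set y0 : Fin d → ℝ := fun j => if j ∈ S then 0 else y j with hy0
  set Acl : V →L[ℝ] V →L[ℝ] ℝ := ∑ j, y0 j • B j with hAcldef
  have hAcl : ∀ u v : V, Acl u v = ∑ j, y0 j * B j u v := by
    intro u v
    simp [hAcldef, ContinuousLinearMap.sum_apply, ContinuousLinearMap.smul_apply]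
  have hAclK : ∀ u ∈ K, ∀ v : V, Acl u v = aForm B y u v := by
    intro u hu v
    rw [hAcl, aForm]
    refine Finset.sum_congr rfl fun j _ => ?_
    by_cases hj : j ∈ S
    · rw [hBK u hu j hj v]
      simp
    · simp [hy0, hj]
  have hKclosed : IsClosed (K : Set V) := by
    have hKset : (K : Set V) = ⋂ j, ⋂ (_ : j ∈ S), (B j) ⁻¹' {0} := by
      ext v
      simp [SetLike.mem_coe, memK]
    rw [hKset]
    exact isClosed_iInter fun j => isClosed_iInter fun _ =>
      isClosed_singleton.preimage (B j).continuous
  haveI : CompleteSpace K := hKclosed.completeSpace_coe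
  have huniq : ∀ u1 u2 : V, (u1 ∈ K ∧ ∀ v ∈ K, aForm B y u1 v = f v) →
      (u2 ∈ K ∧ ∀ v ∈ K, aForm B y u2 v = f v) → u1 = u2 := by
    rintro u1 u2 ⟨hm1, hs1⟩ ⟨hm2, hs2⟩
    have hw : u1 - u2 ∈ K := K.sub_mem hm1 hm2
    have h0 : aForm B y (u1 - u2) (u1 - u2) = 0 := by
      have hsplit : aForm B y (u1-u2) (u1-u2)
          = aForm B y u1 (u1-u2) - aForm B y u2 (u1-u2) := by
        simp only [aForm, map_sub, ContinuousLinearMap.sub_apply, mul_sub,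
          Finset.sum_sub_distrib]
        ring
      rw [hsplit, hs1 _ hw, hs2 _ hw, sub_self]
    have hterm : ∀ j ∈ Finset.univ, (0:ℝ) ≤ y j * B j (u1-u2) (u1-u2) := by
      intro j _
      by_cases hj : j ∈ S
      · rw [hBK _ hw j hj]
        simp
      · exact mul_nonneg (hy j hj).le (hnonneg j _)
    have hall := (Finset.sum_eq_zero_iff_of_nonneg hterm).1 h0
    have hzero : ∀ j, B j (u1-u2) (u1-u2) = 0 := by
      intro j
      by_cases hj : j ∈ S
      · exact hBK _ hw j hj _
      · rcases mul_eq_zero.1 (hall j (Finset.mem_univ j)) with h | h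
        · exact absurd h (hy j hj).ne'
        · exact h
    have hnz : ‖u1 - u2‖^2 = 0 := by
      rw [← hnormsq]
      exact Finset.sum_eq_zero fun j _ => hzero j
    exact sub_eq_zero.1 (norm_eq_zero.1 (pow_eq_zero_iff two_ne_zero |>.1 hnz))
  constructor
  · -- existence and uniqueness
    set bK : K →L[ℝ] K →L[ℝ] ℝ := ((Acl.comp K.subtypeL).flip.comp K.subtypeL).flip with hbKdef
    have hbK : ∀ u v : K, bK u v = Acl (u : V) (v : V) := fun u v => rfl
    have coercive : IsCoercive bK := by
      refine ⟨c0, hc0, fun u => ?_⟩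
      have h1 : c0 * ‖(u:V)‖^2 ≤ bK u u := by
        rw [hbK, hAcl, ← hnormsq, Finset.mul_sum]
        refine Finset.sum_le_sum fun j _ => ?_
        by_cases hj : j ∈ S
        · rw [hBK _ u.2 j hj]
          simp
        · simp only [hy0, if_neg hj]
          exact mul_le_mul_of_nonneg_right (hc0le j hj) (hnonneg j _)
      calc c0 * ‖u‖ * ‖u‖ = c0 * ‖(u:V)‖^2 := by rw [Submodule.coe_norm]; ring
        _ ≤ bK u u := h1
    set u0 : K := coercive.continuousLinearEquivOfBilin.symm
      ((InnerProductSpace.toDual ℝ K).symm (f.comp K.subtypeL)) with hu0def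
    have hu0 : ∀ w : K, bK u0 w = f (w : V) := by
      intro w
      rw [← coercive.continuousLinearEquivOfBilin_apply u0 w, hu0def,
        ContinuousLinearEquiv.apply_symm_apply, InnerProductSpace.toDual_symm_apply]
      rfl
    have hsol0 : ∀ v ∈ K, aForm B y (u0 : V) v = f v := by
      intro v hv
      rw [← hAclK _ u0.2 v]
      exact ((hbK u0 ⟨v, hv⟩).symm.trans (hu0 ⟨v, hv⟩))
    exact ⟨(u0 : V), ⟨u0.2, hsol0⟩, fun u' hu' => huniq u' (u0 : V) hu' ⟨u0.2, hsol0⟩⟩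
  · -- convergence
    rintro uS ⟨hm, hsol⟩ yseq useq hpos hfix hto hwsol
    set FS : Finset (Fin d) := Finset.univ.filter (fun j => j ∈ S) with hFSdef
    have hFSmem : ∀ j, j ∈ FS ↔ j ∈ S := fun j => by simp [hFSdef]
    set e : ℕ → V := fun n => useq n - uS with he
    set Q : V → ℝ := fun v => ∑ j ∈ FS, B j v v with hQdef
    have hQnn : ∀ v, 0 ≤ Q v := fun v => Finset.sum_nonneg fun j _ => hnonneg j v
    set r : V →L[ℝ] ℝ := f - Acl uS with hrdef
    have hrK : ∀ v ∈ K, r v = 0 := by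
      intro v hv
      have hAv : Acl uS v = f v := (hAclK uS hm v).trans (hsol v hv)
      simp [hrdef, ContinuousLinearMap.sub_apply, hAv]
    set g : V := (InnerProductSpace.toDual ℝ V).symm r with hgdef
    have hg : ∀ v, ⟪g, v⟫_ℝ = r v := fun v => by
      rw [hgdef]; exact InnerProductSpace.toDual_symm_apply
    set E : ℕ → ℝ := fun n => aForm B (yseq n) (e n) (e n) with hEdef
    have hEr : ∀ n, E n = ⟪g, e n⟫_ℝ := by
      intro n
      have h1 : aForm B (yseq n) uS (e n) = Acl uS (e n) := by
        rw [aForm, hAcl]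
        refine Finset.sum_congr rfl fun j _ => ?_
        by_cases hj : j ∈ S
        · rw [hBK uS hm j hj]
          simp
        · rw [hfix n j hj]
          simp [hy0, hj]
      have h2 : E n = aForm B (yseq n) (useq n) (e n) - aForm B (yseq n) uS (e n) := by
        simp only [hEdef, he, aForm, map_sub, ContinuousLinearMap.sub_apply, mul_sub,
          Finset.sum_sub_distrib]
        ring
      rw [h2, hwsol n (e n), h1, hg]
      simp [hrdef, ContinuousLinearMap.sub_apply]
    have hEnn : ∀ n, 0 ≤ E n := fun n =>
      Finset.sum_nonneg fun j _ => mul_nonneg (hpos n j).le (hnonneg j _)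
    have hEc : ∀ n, (∀ j ∈ FS, c0 ≤ yseq n j) → c0 * ‖e n‖^2 ≤ E n := by
      intro n hn
      rw [hEdef, ← hnormsq, Finset.mul_sum]
      refine Finset.sum_le_sum fun j _ => ?_
      have hcy : c0 ≤ yseq n j := by
        by_cases hj : j ∈ S
        · exact hn j ((hFSmem j).2 hj)
        · rw [hfix n j hj]
          exact hc0le j hj
      exact mul_le_mul_of_nonneg_right hcy (hnonneg j _)
    have hev0 : ∀ᶠ n in atTop, ∀ j ∈ FS, c0 ≤ yseq n j := by
      rw [eventually_all_finset]
      intro j hj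
      exact (hto j ((hFSmem j).1 hj)).eventually_ge_atTop c0
    set R : ℝ := ‖g‖ / c0 with hRdef
    have hRnn : 0 ≤ R := div_nonneg (norm_nonneg g) hc0.le
    have hbnd : ∀ᶠ n in atTop, ‖e n‖ ≤ R := by
      refine hev0.mono fun n hn => ?_
      have h1 := hEc n hn
      have h2 : E n ≤ ‖g‖ * ‖e n‖ := (hEr n).le.trans (real_inner_le_norm g (e n))
      have h3 : c0 * ‖e n‖^2 ≤ ‖g‖ * ‖e n‖ := h1.trans h2
      rcases eq_or_lt_of_le (norm_nonneg (e n)) with h4 | h4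
      · rw [hRdef, ← h4]
        positivity
      · rw [hRdef, le_div_iff₀ hc0]
        have h5 : (‖e n‖ * c0) * ‖e n‖ ≤ ‖g‖ * ‖e n‖ := by
          calc (‖e n‖ * c0) * ‖e n‖ = c0 * ‖e n‖^2 := by ring
            _ ≤ ‖g‖ * ‖e n‖ := h3
        exact le_of_mul_le_mul_right h5 h4
    have hEb : ∀ᶠ n in atTop, E n ≤ ‖g‖ * R := by
      refine hbnd.mono fun n hn => ?_
      have h2 : E n ≤ ‖g‖ * ‖e n‖ := (hEr n).le.trans (real_inner_le_norm g (e n))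
      exact h2.trans (mul_le_mul_of_nonneg_left hn (norm_nonneg g))
    have hQ0 : Tendsto (fun n => Q (e n)) atTop (nhds 0) := by
      by_cases hne : FS.Nonempty
      · set M : ℕ → ℝ := fun n => FS.inf' hne (yseq n) with hMdef
        have hM : Tendsto M atTop atTop := by
          rw [tendsto_atTop]
          intro b
          have hb : ∀ᶠ n in atTop, ∀ j ∈ FS, b ≤ yseq n j := by
            rw [eventually_all_finset]
            intro j hj
            exact (hto j ((hFSmem j).1 hj)).eventually_ge_atTop b
          exact hb.mono fun n hn => Finset.le_inf' hne _ hn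
        refine squeeze_zero' (Eventually.of_forall fun n => hQnn (e n)) ?_
          (hM.const_div_atTop (‖g‖ * R))
        filter_upwards [hev0, hEb] with n h1 h2
        have hMc : c0 ≤ M n := Finset.le_inf' hne _ h1
        have hMpos : 0 < M n := lt_of_lt_of_le hc0 hMc
        have hMQ : M n * Q (e n) ≤ E n := by
          have hsplit : E n = (∑ j ∈ FS, yseq n j * B j (e n) (e n)) +
              ∑ j ∈ Finset.univ.filter (fun j => ¬ j ∈ S), yseq n j * B j (e n) (e n) := by
            rw [hEdef, hFSdef]
            exact (Finset.sum_filter_add_sum_filter_not Finset.univ (fun j => j ∈ S) _).symm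
          rw [hsplit, hQdef, Finset.mul_sum]
          have hs1 : ∑ j ∈ FS, M n * B j (e n) (e n)
              ≤ ∑ j ∈ FS, yseq n j * B j (e n) (e n) :=
            Finset.sum_le_sum fun j hj =>
              mul_le_mul_of_nonneg_right (Finset.inf'_le _ hj) (hnonneg j _)
          have hs2 : (0:ℝ) ≤ ∑ j ∈ Finset.univ.filter (fun j => ¬ j ∈ S),
              yseq n j * B j (e n) (e n) :=
            Finset.sum_nonneg fun j _ => mul_nonneg (hpos n j).le (hnonneg j _)
          linarith
        rw [le_div_iff₀ hMpos]
        calc Q (e n) * M n = M n * Q (e n) := mul_comm _ _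
          _ ≤ E n := hMQ
          _ ≤ ‖g‖ * R := h2
      · have hQz : ∀ n, Q (e n) = 0 := fun n => by
          rw [hQdef]
          simp only [Finset.not_nonempty_iff_eq_empty.1 hne, Finset.sum_empty]
        simpa [hQz] using (tendsto_const_nhds : Tendsto (fun _ : ℕ => (0:ℝ)) atTop (nhds 0))
    -- the operator T
    set T : V → V := fun v => ∑ j ∈ FS, (InnerProductSpace.toDual ℝ V).symm (B j v) with hTdef
    have hT : ∀ v w : V, ⟪T v, w⟫_ℝ = ∑ j ∈ FS, B j v w := by
      intro v w
      rw [show T v = ∑ j ∈ FS, (InnerProductSpace.toDual ℝ V).symm (B j v) from rfl, sum_inner]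
      exact Finset.sum_congr rfl fun j _ => InnerProductSpace.toDual_symm_apply
    set TL : V →ₗ[ℝ] V :=
      { toFun := T
        map_add' := fun a b => ext_inner_right ℝ fun w => by
          rw [hT, inner_add_left, hT, hT, ← Finset.sum_add_distrib]
          exact Finset.sum_congr rfl fun j _ => by
            rw [map_add, ContinuousLinearMap.add_apply]
        map_smul' := fun c a => ext_inner_right ℝ fun w => by
          rw [hT, RingHom.id_apply, real_inner_smul_left, hT, Finset.mul_sum]
          exact Finset.sum_congr rfl fun j _ => by
            rw [map_smul, ContinuousLinearMap.smul_apply, smul_eq_mul] } with hTLdef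
    set W : Submodule ℝ V := LinearMap.range TL with hWdef
    have hTzero : ∀ v : V, v ∈ K ↔ T v = 0 := by
      intro v
      constructor
      · intro hv
        have hz : ∀ j ∈ FS, ((InnerProductSpace.toDual ℝ V).symm (B j v)) = 0 := fun j hj => by
          rw [(memK v).1 hv j ((hFSmem j).1 hj), map_zero]
        calc T v = ∑ j ∈ FS, (InnerProductSpace.toDual ℝ V).symm (B j v) := rfl
          _ = 0 := Finset.sum_eq_zero hz
      · intro hv
        rw [memK]
        intro j hj
        have hsum0 : ∑ i ∈ FS, B i v v = 0 := by
          rw [← hT v v, hv, inner_zero_left]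
        have hterm : ∀ i ∈ FS, (0:ℝ) ≤ B i v v := fun i _ => hnonneg i v
        have hjz := (Finset.sum_eq_zero_iff_of_nonneg hterm).1 hsum0 j ((hFSmem j).2 hj)
        ext w
        rw [ContinuousLinearMap.zero_apply]
        exact bil_zero_of_self (B j) (hsymm j) (hnonneg j) hjz w
    have hWorth : Wᗮ = K := by
      ext v
      rw [Submodule.mem_orthogonal]
      constructor
      · intro h
        rw [hTzero]
        have h1 : ⟪T v, T v⟫_ℝ = 0 := by
          have h2 : ⟪TL (T v), v⟫_ℝ = 0 := h (TL (T v)) ⟨T v, rfl⟩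
          rw [← h2]
          rw [show (TL (T v) : V) = T (T v) from rfl, hT, hT]
          exact Finset.sum_congr rfl fun j _ => hsymm j v (T v)
        exact inner_self_eq_zero.1 h1
      · intro hv u hu
        obtain ⟨w, rfl⟩ := hu
        rw [show (TL w : V) = T w from rfl, hT,
          Finset.sum_congr rfl fun j _ => hsymm j w v, ← hT, (hTzero v).1 hv, inner_zero_left]
    have hgK : g ∈ Kᗮ := by
      rw [Submodule.mem_orthogonal]
      intro u hu
      rw [real_inner_comm, hg]
      exact hrK u hu
    have hgW : g ∈ closure (W : Set V) := by
      have hcl : Kᗮ = W.topologicalClosure := by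
        rw [← hWorth, Submodule.orthogonal_orthogonal_eq_closure]
      rw [hcl] at hgK
      exact hgK
    have hE0 : Tendsto E atTop (nhds 0) := by
      rw [NormedAddCommGroup.tendsto_nhds_zero]
      intro ε hε
      set δ : ℝ := ε / (2 * (R + 1)) with hδdef
      have hδ : 0 < δ := by positivity
      obtain ⟨b, hbW, hbdist⟩ := Metric.mem_closure_iff.1 hgW δ hδ
      obtain ⟨h, rfl⟩ := hbW
      have hδR : δ * R ≤ ε / 2 := by
        have h1 : δ * R ≤ δ * (R + 1) := mul_le_mul_of_nonneg_left (by linarith) hδ.le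
        have h2 : δ * (R + 1) = ε / 2 := by
          rw [hδdef]
          field_simp
        linarith
      have hsmall : ∀ᶠ n in atTop,
          Real.sqrt (Q h) * Real.sqrt (Q (e n)) < ε / 2 := by
        have h1 : Tendsto (fun n => Real.sqrt (Q (e n))) atTop (nhds 0) := by
          have h3 := (Real.continuous_sqrt.tendsto 0).comp hQ0
          simpa [Function.comp_def] using h3
        have h4 := h1.const_mul (Real.sqrt (Q h))
        rw [mul_zero] at h4
        exact h4.eventually (gt_mem_nhds (by positivity))
      filter_upwards [hbnd, hsmall] with n h1 h2
      have e1 : E n = ⟪g - TL h, e n⟫_ℝ + ⟪(TL h : V), e n⟫_ℝ := by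
        rw [inner_sub_left, hEr n]
        ring
      have e2 : ⟪g - TL h, e n⟫_ℝ ≤ δ * R := by
        refine (real_inner_le_norm _ _).trans ?_
        have hgb : ‖g - TL h‖ ≤ δ := by
          rw [← dist_eq_norm]
          exact hbdist.le
        exact mul_le_mul hgb h1 (norm_nonneg _) hδ.le
      have e3 : ⟪(TL h : V), e n⟫_ℝ ≤ Real.sqrt (Q h) * Real.sqrt (Q (e n)) := by
        rw [show (TL h : V) = T h from rfl, hT, hQdef]
        exact sum_bil_le B hsymm hnonneg FS h (e n)
      have hlt : E n < ε := by linarith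
      rw [Real.norm_eq_abs, abs_of_nonneg (hEnn n)]
      exact hlt
    have hsq : Tendsto (fun n => ‖e n‖^2) atTop (nhds 0) := by
      refine squeeze_zero' (g := fun n => E n / c0)
        (Eventually.of_forall fun n => sq_nonneg _) ?_ ?_
      · refine hev0.mono fun n hn => ?_
        have h1 := hEc n hn
        rw [le_div_iff₀ hc0]
        linarith
      · have h5 := hE0.div_const c0
        simpa using h5
    have hnorm : Tendsto (fun n => ‖e n‖) atTop (nhds 0) := by
      have h6 := (Real.continuous_sqrt.tendsto 0).comp hsq
      simp only [Function.comp_def] at h6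
      rw [Real.sqrt_zero] at h6
      exact h6.congr fun n => Real.sqrt_sq (norm_nonneg _)
    rw [tendsto_iff_norm_sub_tendsto_zero]
    exact hnorm


end
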